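/- Let (X, 𝓘) be the intersection of p matroids, i.e., 𝓘 = 𝓘^1 ∩ ⋯ ∩ 𝓘^p where each (X, 𝓘^i) is a matroid, and let f : 2^X → ℝ be a polymatroid set function. Then every greedy solution G and every optimal solution O satisfy (1 + p) · f(G) ≥ f(O). -/
import Mathlib


open Finset

variable {α : Type*} [DecidableEq α] [Fintype α]

/-- Monotone set function. -/
def SetMonotone (f : Finset α → ℝ) : Prop :=
  ∀ ⦃A B : Finset α⦄, A ⊆ B → f A ≤ f B

/-- Submodular set function. -/
def SetSubmodular (f : Finset α → ℝ) : Prop :=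
  ∀ ⦃A B : Finset α⦄, A ⊆ B → ∀ j ∉ B, f (insert j A) - f A ≥ f (insert j B) - f B

/-- Polymatroid set function: monotone, submodular, and `f ∅ = 0`. -/
def PolymatroidFn (f : Finset α → ℝ) : Prop :=
  SetMonotone f ∧ SetSubmodular f ∧ f ∅ = 0

/-- Hereditary collection of sets. -/
def Hereditary (I : Finset α → Prop) : Prop :=
  ∀ ⦃B⦄, I B → ∀ ⦃A⦄, A ⊆ B → I A

/-- Independence system: nonempty hereditary collection. -/
def IndepSystem (I : Finset α → Prop) : Prop :=
  (∃ S, I S) ∧ Hereditary I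

/-- Augmentation property. -/
def Augmentation (I : Finset α → Prop) : Prop :=
  ∀ ⦃A B⦄, I A → I B → A.card < B.card → ∃ j ∈ B, j ∉ A ∧ I (insert j A)

/-- Matroid: independence system with augmentation. -/
def IsMatroid (I : Finset α → Prop) : Prop :=
  IndepSystem I ∧ Augmentation I

/-- One step of the greedy algorithm: add a feasible element of largest gain. -/
def GreedyStep (I : Finset α → Prop) (f : Finset α → ℝ) (S S' : Finset α) : Prop :=
  ∃ a ∉ S, I (insert a S) ∧ S' = insert a S ∧
    ∀ b ∉ S, I (insert b S) → f (insert b S) ≤ f (insert a S)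

/-- Greedy solution: obtained from `∅` by greedy steps, and no further feasible addition. -/
def IsGreedy (I : Finset α → Prop) (f : Finset α → ℝ) (G : Finset α) : Prop :=
  Relation.ReflTransGen (GreedyStep I f) ∅ G ∧ ∀ a ∉ G, ¬ I (insert a G)

/-- Optimal solution: member of the constraint maximizing `f`. -/
def IsOptimal (I : Finset α → Prop) (f : Finset α → ℝ) (O : Finset α) : Prop :=
  I O ∧ ∀ S, I S → f S ≤ f O

/-- `B` is a basis of `S`: a maximal independent subset of `S`. -/
def IsBasisOf (I : Finset α → Prop) (S B : Finset α) : Prop :=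
  B ⊆ S ∧ I B ∧ ∀ ⦃B' : Finset α⦄, I B' → B ⊆ B' → B' ⊆ S → B' = B

/-- Lower rank of `S`: minimum cardinality of a basis of `S`. -/
noncomputable def lr (I : Finset α → Prop) (S : Finset α) : ℕ :=
  sInf {n : ℕ | ∃ B, IsBasisOf I S B ∧ B.card = n}

/-- Upper rank of `S`: maximum cardinality of a basis of `S`. -/
noncomputable def ur (I : Finset α → Prop) (S : Finset α) : ℕ :=
  sSup {n : ℕ | ∃ B, IsBasisOf I S B ∧ B.card = n}

/-- Rank quotient `q(X, 𝓘)`. -/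
noncomputable def rankQuotient (I : Finset α → Prop) : ℝ :=
  sInf {x : ℝ | ∃ S : Finset α, 0 < ur I S ∧ x = (lr I S : ℝ) / (ur I S : ℝ)}

/-- Total curvature `c(f)`. -/
noncomputable def totalCurvature (f : Finset α → ℝ) : ℝ :=
  sSup {x : ℝ | ∃ j : α, f {j} ≠ f ∅ ∧
    x = 1 - (f Finset.univ - f (Finset.univ.erase j)) / (f {j} - f ∅)}

/-- Partial curvature `b(f)`, over pairs `(j, A)` with `j ∈ A ∈ 𝓘`. -/
noncomputable def partialCurvature (I : Finset α → Prop) (f : Finset α → ℝ) : ℝ :=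
  sSup {x : ℝ | ∃ (j : α) (A : Finset α), I A ∧ j ∈ A ∧ f {j} ≠ f ∅ ∧
    x = 1 - (f A - f (A.erase j)) / (f {j} - f ∅)}

/-- Total `k`-batch curvature `c_k`. -/
noncomputable def batchCurvature (f : Finset α → ℝ) (k : ℕ) : ℝ :=
  sSup {x : ℝ | ∃ J : Finset α, J.card = k ∧ f J ≠ f ∅ ∧
    x = 1 - (f Finset.univ - f (Finset.univ \ J)) / (f J - f ∅)}

/-- Polymatroid function defined on a collection `𝓘`. -/
def PolymatroidOn (I : Finset α → Prop) (f : Finset α → ℝ) : Prop :=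
  f ∅ = 0 ∧ (∀ ⦃A B : Finset α⦄, A ⊆ B → I B → f A ≤ f B) ∧
    ∀ ⦃A B : Finset α⦄, A ⊆ B → ∀ j ∉ B, I (insert j B) →
      f (insert j A) - f A ≥ f (insert j B) - f B

/-- One step of the batched greedy algorithm: add a feasible batch of size `k`
of largest gain. -/
def BatchStep (I : Finset α → Prop) (f : Finset α → ℝ) (k : ℕ) (S S' : Finset α) : Prop :=
  ∃ J : Finset α, Disjoint J S ∧ J.card = k ∧ I (S ∪ J) ∧ S' = S ∪ J ∧
    ∀ J' : Finset α, Disjoint J' S → J'.card = k → I (S ∪ J') → f (S ∪ J') ≤ f (S ∪ J)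

/-- `k`-batch greedy solution: `l - 1` batches of size `k` followed by one batch of
size `m`. -/
def IsBatchGreedy (I : Finset α → Prop) (f : Finset α → ℝ) (k l m : ℕ)
    (S : Finset α) : Prop :=
  ∃ T : ℕ → Finset α, T 0 = ∅ ∧ (∀ t < l - 1, BatchStep I f k (T t) (T (t + 1))) ∧
    BatchStep I f m (T (l - 1)) S


/-- Extract an explicit chain from a reflexive-transitive closure. -/
lemma rtg_chain' {β : Type*} {r : β → β → Prop} {a b : β} (h : Relation.ReflTransGen r a b) :
    ∃ (t : ℕ) (g : ℕ → β), g 0 = a ∧ g t = b ∧ ∀ i < t, r (g i) (g (i + 1)) := by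
  induction h with
  | refl => exact ⟨0, fun _ => a, rfl, rfl, fun i hi => absurd hi (Nat.not_lt_zero i)⟩
  | @tail b c hab hbc ih =>
      obtain ⟨t, g, h0, hb, hs⟩ := ih
      refine ⟨t + 1, fun i => if i ≤ t then g i else c, by simp [h0], by simp, ?_⟩
      intro i hi
      rcases Nat.lt_or_ge i t with hlt | hge
      · simpa [Nat.le_of_lt hlt, Nat.succ_le_of_lt hlt] using hs i hlt
      · have : i = t := by omega
        subst this
        simp [hb, hbc]

/-- Submodular telescoping over a disjoint set. -/
lemma submod_telescope' {α : Type*} [DecidableEq α] [Fintype α] {f : Finset α → ℝ}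
    (hf : SetSubmodular f) :
    ∀ (T Gs : Finset α), Disjoint T Gs →
      f (Gs ∪ T) - f Gs ≤ ∑ o ∈ T, (f (insert o Gs) - f Gs) := by
  intro T
  induction T using Finset.induction with
  | empty => intro Gs _; simp
  | @insert o T ho ih =>
      intro Gs hdisj
      have hdT : Disjoint T Gs := (Finset.disjoint_insert_left.mp hdisj).2
      have hoG : o ∉ Gs := (Finset.disjoint_insert_left.mp hdisj).1
      have hoU : o ∉ Gs ∪ T := by simp [hoG, ho]
      have hsub : f (insert o Gs) - f Gs ≥ f (insert o (Gs ∪ T)) - f (Gs ∪ T) :=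
        hf Finset.subset_union_left o hoU
      have heq : Gs ∪ insert o T = insert o (Gs ∪ T) := Finset.union_insert o Gs T
      rw [Finset.sum_insert ho, heq]
      have := ih Gs hdT
      linarith

/-- Greedy bound for the intersection of `p` matroids with a polymatroid objective:
`(1 + p) · f(G) ≥ f(O)`. -/
theorem greedy_bound_matroid_intersection {α : Type*} [DecidableEq α] [Fintype α]
    (p : ℕ) (hp : 0 < p)
    (I : Finset α → Prop) (Im : Fin p → Finset α → Prop)
    (hm : ∀ i : Fin p, IsMatroid (Im i))
    (hI : ∀ S : Finset α, I S ↔ ∀ i : Fin p, Im i S)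
    (f : Finset α → ℝ) (hf : PolymatroidFn f)
    (G O : Finset α) (hG : IsGreedy I f G) (hO : IsOptimal I f O) :
    (1 + (p : ℝ)) * f G ≥ f O := by
  classical
  obtain ⟨hmono, hsubm, hf0⟩ := hf
  obtain ⟨hGchain, hGmax⟩ := hG
  obtain ⟨hOI, hOopt⟩ := hO
  -- hereditary property of the intersection
  have hIhered : Hereditary I := by
    intro B hB A hAB
    exact (hI A).mpr fun i => (hm i).1.2 ((hI B).mp hB i) hAB
  -- extract the greedy chain
  obtain ⟨t, g, hg0, hgt, hstep⟩ := rtg_chain' hGchain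
  -- chain is increasing
  have hsucc : ∀ i < t, g i ⊆ g (i + 1) := by
    intro i hi
    obtain ⟨a, _, _, heq, _⟩ := hstep i hi
    rw [heq]; exact Finset.subset_insert a (g i)
  have hmonog : ∀ i j, i ≤ j → j ≤ t → g i ⊆ g j := by
    intro i j hij hjt
    induction j with
    | zero => simpa [Nat.le_zero.mp hij]
    | succ k ih =>
        rcases Nat.lt_or_ge i (k + 1) with h | h
        · exact (ih (by omega) (by omega)).trans (hsucc k (by omega))
        · have : i = k + 1 := by omega
          subst this; rfl
  have hgG : ∀ i ≤ t, g i ⊆ G := by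
    intro i hi; rw [← hgt]; exact hmonog i t hi le_rfl
  -- each chain element is independent
  have hIg : ∀ i ≤ t, I (g i) := by
    intro i hi
    induction i with
    | zero =>
        rw [hg0]
        exact (hI ∅).mpr fun j => by
          obtain ⟨S, hS⟩ := (hm j).1.1
          exact (hm j).1.2 hS (Finset.empty_subset S)
    | succ k ih =>
        obtain ⟨a, _, hIa, heq, _⟩ := hstep k (by omega)
        rw [heq]; exact hIa
  have hcardg : ∀ i ≤ t, (g i).card ≤ i := by
    intro i hi
    induction i with
    | zero => simp [hg0]
    | succ k ih =>
        obtain ⟨a, _, _, heq, _⟩ := hstep k (by omega)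
        rw [heq]
        calc (insert a (g k)).card ≤ (g k).card + 1 := Finset.card_insert_le a (g k)
          _ ≤ k + 1 := by have := ih (by omega); omega
  set T : Finset α := O \ G with hT
  -- first infeasibility time
  have hex : ∀ o ∈ T, ∃ s, ¬ I (insert o (g s)) := by
    intro o ho
    exact ⟨t, by rw [hgt]; exact hGmax o (Finset.mem_sdiff.mp ho).2⟩
  set D : α → ℕ := fun o => if h : ∃ s, ¬ I (insert o (g s)) then Nat.find h else 0 with hD
  have hDspec : ∀ o ∈ T, ¬ I (insert o (g (D o))) := by
    intro o ho
    have h := hex o ho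
    simp only [hD, dif_pos h]
    exact Nat.find_spec h
  have hDmin : ∀ o ∈ T, ∀ s < D o, I (insert o (g s)) := by
    intro o ho s hs
    have h := hex o ho
    simp only [hD, dif_pos h] at hs
    have := Nat.find_min h hs
    exact not_not.mp this
  have hDle : ∀ o ∈ T, D o ≤ t := by
    intro o ho
    have h := hex o ho
    simp only [hD, dif_pos h]
    exact Nat.find_le (by rw [hgt]; exact hGmax o (Finset.mem_sdiff.mp ho).2)
  have hDpos : ∀ o ∈ T, 1 ≤ D o := by
    intro o ho
    by_contra hc
    have h0 : D o = 0 := by omega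
    have := hDspec o ho
    rw [h0, hg0] at this
    exact this (hIhered hOI (by
      simp [Finset.insert_subset_iff, (Finset.mem_sdiff.mp ho).1]))
  -- counting bound
  have hcount : ∀ i ≤ t, ((T.filter (fun o => D o ≤ i)).card : ℝ) ≤ (p : ℝ) * i := by
    intro i hi
    set S := T.filter (fun o => D o ≤ i) with hS
    have hnf : ∀ o ∈ S, ¬ I (insert o (g i)) := by
      intro o ho
      obtain ⟨hoT, hDi⟩ := Finset.mem_filter.mp ho
      intro hIi
      exact hDspec o hoT (hIhered hIi (Finset.insert_subset_insert o
        (hmonog (D o) i hDi hi)))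
    have hSsub : S ⊆ Finset.univ.biUnion
        (fun j : Fin p => S.filter (fun o => ¬ Im j (insert o (g i)))) := by
      intro o ho
      have := hnf o ho
      rw [hI] at this
      push_neg at this
      obtain ⟨j, hj⟩ := this
      exact Finset.mem_biUnion.mpr ⟨j, Finset.mem_univ j, Finset.mem_filter.mpr ⟨ho, hj⟩⟩
    have hcardj : ∀ j : Fin p,
        (S.filter (fun o => ¬ Im j (insert o (g i)))).card ≤ i := by
      intro j
      set C := S.filter (fun o => ¬ Im j (insert o (g i))) with hC
      by_contra hc
      push_neg at hc
      have hCO : C ⊆ O := by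
        intro x hx
        have := (Finset.mem_filter.mp (Finset.mem_filter.mp hx).1).1
        exact (Finset.mem_sdiff.mp this).1
      have hImC : Im j C := (hm j).1.2 ((hI O).mp hOI j) hCO
      have hImg : Im j (g i) := (hI (g i)).mp (hIg i hi) j
      have hcard : (g i).card < C.card := lt_of_le_of_lt (hcardg i hi) hc
      obtain ⟨o, hoC, _, hins⟩ := (hm j).2 hImg hImC hcard
      exact (Finset.mem_filter.mp hoC).2 hins
    calc (S.card : ℝ) ≤ ((Finset.univ.biUnion
          (fun j : Fin p => S.filter (fun o => ¬ Im j (insert o (g i))))).card : ℝ) := by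
          exact_mod_cast Finset.card_le_card hSsub
      _ ≤ (∑ j : Fin p, (S.filter (fun o => ¬ Im j (insert o (g i)))).card : ℕ) := by
          exact_mod_cast Finset.card_biUnion_le
      _ ≤ ((p * i : ℕ) : ℝ) := by
          have : ∑ j : Fin p, (S.filter (fun o => ¬ Im j (insert o (g i)))).card ≤ p * i := by
            calc ∑ j : Fin p, (S.filter (fun o => ¬ Im j (insert o (g i)))).card
                ≤ ∑ _j : Fin p, i := Finset.sum_le_sum fun j _ => hcardj j
              _ = p * i := by simp [Finset.sum_const, mul_comm]
          exact_mod_cast this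
      _ = (p : ℝ) * i := by push_cast; ring
  -- greedy gains
  set γ : ℕ → ℝ := fun s => f (g (s + 1)) - f (g s) with hγ
  have hγ0 : ∀ s < t, 0 ≤ γ s := fun s hs => by
    have := hmono (hsucc s hs)
    simp only [hγ]; linarith
  have hγmono : ∀ s, s + 1 < t → γ (s + 1) ≤ γ s := by
    intro s hs
    obtain ⟨a, ha, hIa, heq, _⟩ := hstep (s + 1) hs
    obtain ⟨b, hb, hIb, heqs, hmax⟩ := hstep s (by omega)
    have has : a ∉ g s := fun h => ha (hsucc s (by omega) h)
    have hIas : I (insert a (g s)) :=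
      hIhered hIa (Finset.insert_subset_insert a (hsucc s (by omega)))
    have h1 : f (insert a (g s)) ≤ f (g (s + 1)) := by
      rw [heqs]; exact hmax a has hIas
    have h2 : f (insert a (g s)) - f (g s) ≥ f (insert a (g (s + 1))) - f (g (s + 1)) :=
      hsubm (hsucc s (by omega)) a ha
    simp only [hγ]
    rw [heq]
    linarith
  -- marginal bound
  have hmarg : ∀ o ∈ T, f (insert o G) - f G ≤ γ (D o - 1) := by
    intro o ho
    have hD1 := hDpos o ho
    have hDt := hDle o ho
    set s := D o - 1 with hs
    have hst : s < t := by omega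
    have hsD : s + 1 = D o := by omega
    obtain ⟨b, hb, hIb, heqs, hmax⟩ := hstep s hst
    have hoG : o ∉ G := (Finset.mem_sdiff.mp ho).2
    have hos : o ∉ g s := fun h => hoG (hgG s (by omega) h)
    have hIos : I (insert o (g s)) := hDmin o ho s (by omega)
    have h1 : f (insert o (g s)) ≤ f (g (s + 1)) := by
      rw [heqs]; exact hmax o hos hIos
    have h2 : f (insert o G) - f G ≤ f (insert o (g s)) - f (g s) :=
      hsubm (hgG s (by omega)) o hoG
    simp only [hγ]
    linarith
  -- Abel summation
  have habel : ∀ i ≤ t,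
      (∑ o ∈ T.filter (fun o => D o ≤ i), γ (D o - 1)) +
        ((p : ℝ) * i - (T.filter (fun o => D o ≤ i)).card) * γ (i - 1) ≤
      (p : ℝ) * ∑ s ∈ Finset.range i, γ s := by
    intro i hi
    induction i with
    | zero =>
        have : T.filter (fun o => D o ≤ 0) = ∅ := by
          rw [Finset.filter_eq_empty_iff]
          intro o ho h
          exact absurd (hDpos o ho) (by omega)
        rw [this]
        simp
    | succ k ih =>
        have ihk := ih (by omega)
        have hsplit : T.filter (fun o => D o ≤ k + 1) =
            T.filter (fun o => D o ≤ k) ∪ T.filter (fun o => D o = k + 1) := by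
          ext o
          simp only [Finset.mem_filter, Finset.mem_union]
          constructor
          · rintro ⟨h1, h2⟩
            rcases Nat.lt_or_ge (D o) (k + 1) with h | h
            · exact Or.inl ⟨h1, by omega⟩
            · exact Or.inr ⟨h1, by omega⟩
          · rintro (⟨h1, h2⟩ | ⟨h1, h2⟩) <;> exact ⟨h1, by omega⟩
        have hdisj : Disjoint (T.filter (fun o => D o ≤ k)) (T.filter (fun o => D o = k + 1)) := by
          rw [Finset.disjoint_left]
          intro o h1 h2
          have := (Finset.mem_filter.mp h1).2
          have := (Finset.mem_filter.mp h2).2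
          omega
        have hsum : ∑ o ∈ T.filter (fun o => D o ≤ k + 1), γ (D o - 1) =
            (∑ o ∈ T.filter (fun o => D o ≤ k), γ (D o - 1)) +
              ((T.filter (fun o => D o = k + 1)).card : ℝ) * γ k := by
          rw [hsplit, Finset.sum_union hdisj]
          congr 1
          rw [Finset.sum_congr rfl (fun o ho => by
            have := (Finset.mem_filter.mp ho).2
            rw [show D o - 1 = k from by omega])]
          simp [mul_comm]
        have hcard : ((T.filter (fun o => D o ≤ k + 1)).card : ℝ) =
            ((T.filter (fun o => D o ≤ k)).card : ℝ) +
              ((T.filter (fun o => D o = k + 1)).card : ℝ) := by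
          rw [hsplit, Finset.card_union_of_disjoint hdisj]; push_cast; ring
        have hγk : γ k ≤ γ (k - 1) := by
          rcases Nat.eq_zero_or_pos k with h | h
          · subst h; simp
          · have := hγmono (k - 1) (by omega)
            rwa [show k - 1 + 1 = k from by omega] at this
        have hcoef : 0 ≤ (p : ℝ) * k - ((T.filter (fun o => D o ≤ k)).card : ℝ) := by
          have := hcount k (by omega)
          linarith
        have hkey : ((p : ℝ) * k - ((T.filter (fun o => D o ≤ k)).card : ℝ)) * γ k ≤
            ((p : ℝ) * k - ((T.filter (fun o => D o ≤ k)).card : ℝ)) * γ (k - 1) :=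
          mul_le_mul_of_nonneg_left hγk hcoef
        rw [Finset.sum_range_succ, hsum]
        have hexp : (∑ o ∈ T.filter (fun o => D o ≤ k), γ (D o - 1)) +
            ((T.filter (fun o => D o = k + 1)).card : ℝ) * γ k +
            ((p : ℝ) * (k + 1) - ((T.filter (fun o => D o ≤ k + 1)).card : ℝ)) * γ k =
            (∑ o ∈ T.filter (fun o => D o ≤ k), γ (D o - 1)) +
            ((p : ℝ) * k - ((T.filter (fun o => D o ≤ k)).card : ℝ)) * γ k +
            (p : ℝ) * γ k := by
          rw [hcard]; ring
        push_cast
        push_cast at hexp ihk hkey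
        linarith [hexp, ihk, hkey]
  -- assemble
  have hTfull : T.filter (fun o => D o ≤ t) = T :=
    Finset.filter_true_of_mem (fun o ho => hDle o ho)
  have habelt := habel t le_rfl
  rw [hTfull] at habelt
  have htel : ∑ s ∈ Finset.range t, γ s = f G := by
    have := Finset.sum_range_sub (fun i => f (g i)) t
    simp only [hγ]
    rw [this, hg0, hgt, hf0]
    ring
  have hlast : 0 ≤ ((p : ℝ) * t - (T.card : ℝ)) * γ (t - 1) := by
    rcases Nat.eq_zero_or_pos t with h | h
    · have hTe : T = ∅ := by
        rw [Finset.eq_empty_iff_forall_notMem]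
        intro o ho
        have := hDpos o ho
        have := hDle o ho
        omega
      subst h; simp [hTe]
    · apply mul_nonneg
      · have := hcount t le_rfl
        rw [hTfull] at this
        linarith
      · exact hγ0 (t - 1) (by omega)
  have hOsum : f O ≤ f G + ∑ o ∈ T, (f (insert o G) - f G) := by
    have h1 : f O ≤ f (G ∪ T) := by
      apply hmono
      rw [hT, Finset.union_sdiff_self_eq_union]
      exact Finset.subset_union_right
    have h2 := submod_telescope' hsubm T G Finset.sdiff_disjoint
    linarith
  have hsum2 : ∑ o ∈ T, (f (insert o G) - f G) ≤ ∑ o ∈ T, γ (D o - 1) :=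
    Finset.sum_le_sum hmarg
  rw [htel] at habelt
  linarith
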